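/- Let S be a numerical semigroup with 1 < ⌈c/m⌉ ≤ 2, i.e. m < c ≤ 2m. Then |P∩L|·|L| − 2·d₂ ≥ 0, where L = S ∩ [0,c), P∩L is the set of primitive elements less than c, and d₂ is the number of decomposable elements of S in [c, c+m). Consequently e(S)·|L| ≥ c, i.e. S satisfies Wilf's conjecture. -/

import Mathlib

/-- Wilf's conjecture for `q = 2`: if `m < c ≤ 2m` then
`|P∩L|·|L| − 2·d₂ ≥ 0`, and consequently `e(S)·|L| ≥ c`. -/
theorem wilf_q_two (S : Set ℕ) (m c : ℕ)
    (hS0 : 0 ∈ S) (hSadd : ∀ a ∈ S, ∀ b ∈ S, a + b ∈ S)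
    (hSfin : (Sᶜ : Set ℕ).Finite)
    (hm : m = sInf {n : ℕ | n ∈ S ∧ n ≠ 0})
    (hc : c = sSup (Sᶜ : Set ℕ) + 1)
    (hmc : m < c) (hc2m : c ≤ 2 * m)
    (P D L : Set ℕ)
    (hD : D = {x : ℕ | ∃ y ∈ S, ∃ z ∈ S, y ≠ 0 ∧ z ≠ 0 ∧ x = y + z})
    (hP : P = {x : ℕ | x ∈ S ∧ x ≠ 0} \ D)
    (hL : L = S ∩ Set.Ico 0 c) :
    2 * (D ∩ Set.Ico c (c + m)).ncard ≤ (P ∩ L).ncard * L.ncard ∧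
    c ≤ P.ncard * L.ncard := by
  classical
  -- basic facts
  have hSinf : S.Infinite := by
    have := hSfin.infinite_compl
    rwa [compl_compl] at this
  have hQne : {n : ℕ | n ∈ S ∧ n ≠ 0}.Nonempty := by
    obtain ⟨a, ha⟩ := (hSinf.diff (Set.finite_singleton 0)).nonempty
    exact ⟨a, ha.1, by simpa using ha.2⟩
  have hmS : m ∈ S ∧ m ≠ 0 := hm ▸ Nat.sInf_mem hQne
  have hmle : ∀ x ∈ S, x ≠ 0 → m ≤ x := fun x hx h0 => hm ▸ Nat.sInf_le ⟨hx, h0⟩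
  have hm1 : 1 ≤ m := Nat.one_le_iff_ne_zero.2 hmS.2
  have hcS : ∀ x, c ≤ x → x ∈ S := by
    intro x hx
    by_contra h
    have : x ≤ sSup (Sᶜ : Set ℕ) := le_csSup hSfin.bddAbove h
    omega
  -- A = P ∩ L essentially
  set A : Set ℕ := S ∩ Set.Ico m c with hA
  have hAfin : A.Finite := (Set.finite_Ico m c).subset (Set.inter_subset_right)
  have hDlarge : ∀ x ∈ D, 2 * m ≤ x := by
    intro x hx
    rw [hD] at hx
    obtain ⟨y, hy, z, hz, hy0, hz0, rfl⟩ := hx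
    have := hmle y hy hy0
    have := hmle z hz hz0
    omega
  have hPL : P ∩ L = A := by
    ext x
    simp only [hP, hL, hA, Set.mem_inter_iff, Set.mem_diff, Set.mem_setOf_eq,
      Set.mem_Ico]
    constructor
    · rintro ⟨⟨⟨hxS, hx0⟩, hxD⟩, -, -, hxc⟩
      exact ⟨hxS, hmle x hxS hx0, hxc⟩
    · rintro ⟨hxS, hmx, hxc⟩
      refine ⟨⟨⟨hxS, by omega⟩, fun hxD => ?_⟩, hxS, by omega, hxc⟩
      have := hDlarge x hxD
      omega
  have h0A : (0 : ℕ) ∉ A := by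
    simp only [hA, Set.mem_inter_iff, Set.mem_Ico]
    omega
  have hLA : L = insert 0 A := by
    ext x
    simp only [hL, hA, Set.mem_inter_iff, Set.mem_Ico, Set.mem_insert_iff]
    constructor
    · rintro ⟨hxS, -, hxc⟩
      rcases eq_or_ne x 0 with rfl | hx0
      · exact Or.inl rfl
      · exact Or.inr ⟨hxS, hmle x hxS hx0, hxc⟩
    · rintro (rfl | ⟨hxS, hmx, hxc⟩)
      · exact ⟨hS0, by omega, by omega⟩
      · exact ⟨hxS, by omega, hxc⟩
  set n := A.ncard with hn
  have hLcard : L.ncard = n + 1 := by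
    rw [hLA, Set.ncard_insert_of_notMem h0A hAfin]
  have hn1 : 1 ≤ n := by
    exact (Set.ncard_pos hAfin).2 ⟨m, hmS.1, by simp [Set.mem_Ico]; omega⟩
  -- the set of decomposables in [c, c+m)
  set T : Set ℕ := D ∩ Set.Ico c (c + m) with hT
  have hTfin : T.Finite := (Set.finite_Ico c (c + m)).subset Set.inter_subset_right
  have hdec : ∀ x ∈ T, ∃ p : ℕ × ℕ, p.1 ∈ A ∧ p.2 ∈ A ∧ x = p.1 + p.2 := by
    rintro x ⟨hxD, hxI⟩
    rw [hD] at hxD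
    obtain ⟨y, hy, z, hz, hy0, hz0, rfl⟩ := hxD
    have hmy := hmle y hy hy0
    have hmz := hmle z hz hz0
    simp only [Set.mem_Ico] at hxI
    exact ⟨(y, z), ⟨hy, by simp [Set.mem_Ico]; omega⟩,
      ⟨hz, by simp [Set.mem_Ico]; omega⟩, rfl⟩
  set F : Finset ℕ := hAfin.toFinset with hF
  have hFA : ∀ x, x ∈ F ↔ x ∈ A := fun x => hAfin.mem_toFinset
  have hFcard : F.card = n := by rw [hn, Set.ncard_eq_toFinset_card' ]; simp [hF]
  let f : ℕ → Sym2 ℕ := fun x =>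
    if h : ∃ p : ℕ × ℕ, p.1 ∈ A ∧ p.2 ∈ A ∧ x = p.1 + p.2 then Sym2.mk h.choose.1 h.choose.2
    else Sym2.mk 0 0
  have hf : ∀ x ∈ T, ∃ p : ℕ × ℕ, f x = Sym2.mk p.1 p.2 ∧ p.1 ∈ A ∧ p.2 ∈ A ∧ x = p.1 + p.2 := by
    intro x hx
    have h := hdec x hx
    exact ⟨h.choose, by simp only [f, dif_pos h], h.choose_spec.1,
      h.choose_spec.2.1, h.choose_spec.2.2⟩
  have hTcard : T.ncard ≤ n * (n + 1) / 2 := by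
    have hle : T.ncard ≤ (↑F.sym2 : Set (Sym2 ℕ)).ncard := by
      apply Set.ncard_le_ncard_of_injOn f
      · intro x hx
        obtain ⟨p, hfx, hp1, hp2, -⟩ := hf x hx
        rw [hfx, show Sym2.mk p.1 p.2 = s(p.1, p.2) from rfl, Finset.mem_coe,
          Finset.mk_mem_sym2_iff]
        exact ⟨(hFA _).2 hp1, (hFA _).2 hp2⟩
      · intro x hx y hy hxy
        obtain ⟨p, hfx, -, -, hxp⟩ := hf x hx
        obtain ⟨q, hfy, -, -, hyq⟩ := hf y hy
        rw [hfx, hfy, Sym2.mk_eq_mk_iff] at hxy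
        have hsum : p.1 + p.2 = q.1 + q.2 := by
          rcases hxy with rfl | rfl
          · rfl
          · exact Nat.add_comm _ _
        omega

    rw [Set.ncard_coe_finset, Finset.card_sym2, hFcard, Nat.choose_two_right] at hle
    calc T.ncard ≤ (n + 1) * (n + 1 - 1) / 2 := hle
      _ = n * (n + 1) / 2 := by rw [Nat.add_sub_cancel, Nat.mul_comm]
  have part1 : 2 * T.ncard ≤ (P ∩ L).ncard * L.ncard := by
    rw [hPL, hLcard, ← hn]
    have h2 : n * (n + 1) / 2 * 2 ≤ n * (n + 1) := Nat.div_mul_le_self _ _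
    omega
  refine ⟨part1, ?_⟩
  -- primitives in [c, c+m)
  set P₂ : Set ℕ := P ∩ Set.Ico c (c + m) with hP₂
  have hP₂fin : P₂.Finite := (Set.finite_Ico c (c + m)).subset Set.inter_subset_right
  have hPfin : P.Finite := by
    apply (Set.finite_Ico 0 (c + m)).subset
    intro x hx
    rw [hP] at hx
    obtain ⟨⟨hxS, hx0⟩, hxD⟩ := hx
    simp only [Set.mem_Ico]
    by_contra h
    push_neg at h
    have h' : c + m ≤ x := h (Nat.zero_le x)
    have hxm : x - m ∈ S := hcS _ (by omega)
    exact hxD (hD ▸ ⟨m, hmS.1, x - m, hxm, hmS.2, by omega, by omega⟩)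
  -- m ≤ d₂ + p₂
  have hIco : (Set.Ico c (c + m)).ncard = m := by
    rw [← Finset.coe_Ico, Set.ncard_coe_finset, Nat.card_Ico]
    omega
  have hcover : Set.Ico c (c + m) ⊆ T ∪ P₂ := by
    intro x hx
    simp only [Set.mem_Ico] at hx
    have hxS : x ∈ S := hcS x hx.1
    have hx0 : x ≠ 0 := by omega
    by_cases hxD : x ∈ D
    · exact Or.inl ⟨hxD, by simp [Set.mem_Ico]; omega⟩
    · exact Or.inr ⟨hP ▸ ⟨⟨hxS, hx0⟩, hxD⟩, by simp [Set.mem_Ico]; omega⟩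
  have hmd : m ≤ T.ncard + P₂.ncard := by
    calc m = (Set.Ico c (c + m)).ncard := hIco.symm
      _ ≤ (T ∪ P₂).ncard := Set.ncard_le_ncard hcover (hTfin.union hP₂fin)
      _ ≤ T.ncard + P₂.ncard := Set.ncard_union_le _ _
  -- P.ncard ≥ n + p₂
  have hdisj : Disjoint A P₂ := by
    rw [Set.disjoint_left]
    rintro x ⟨-, hx⟩ ⟨-, hx'⟩
    simp only [Set.mem_Ico] at hx hx'
    omega
  have hPge : n + P₂.ncard ≤ P.ncard := by
    have hsub : A ∪ P₂ ⊆ P := by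
      apply Set.union_subset _ Set.inter_subset_left
      rw [← hPL]; exact Set.inter_subset_left
    calc n + P₂.ncard = (A ∪ P₂).ncard := (Set.ncard_union_eq hdisj hAfin hP₂fin).symm
      _ ≤ P.ncard := Set.ncard_le_ncard hsub hPfin
  -- final arithmetic
  rw [hLcard]
  rw [hPL, hLcard, ← hn] at part1
  set p₂ := P₂.ncard
  set d₂ := T.ncard
  calc c ≤ 2 * m := hc2m
    _ ≤ 2 * d₂ + 2 * p₂ := by omega
    _ ≤ n * (n + 1) + p₂ * (n + 1) := by nlinarith
    _ = (n + p₂) * (n + 1) := by ring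
    _ ≤ P.ncard * (n + 1) := Nat.mul_le_mul_right _ hPge
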